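/- Let F: ℝ → ℝ be continuous, nonnegative, and locally Lipschitz, with F(y) > 0 for y ≥ L₁ > 0, and suppose T − ∫_{L₁}^{∞} dy/F(y) < 0. Then the ODE s(t) = L₁ + ∫_t^T F(s(r)) dr has a solution s: [0,T] → ℝ with s(T) = L₁, s nonincreasing in a suitable sense (s(t) ≥ L₁ for all t), and s(t) is finite on all of [0,T]. -/

import Mathlib

open MeasureTheory Set intervalIntegral

/-- The backward ODE s(t) = L₁ + ∫_t^T F(s(r))dr has a finite solution on [0,T]
with s ≥ L₁ when the blow-up time T − ∫_{L₁}^∞ dy/F(y) is negative. -/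
theorem stmt8 (F : ℝ → ℝ) (L₁ T : ℝ) (hL₁ : 0 < L₁) (hT : 0 < T)
    (hF : Continuous F) (hFnn : ∀ y : ℝ, 0 ≤ F y)
    (hlip : LocallyLipschitz F)
    (hpos : ∀ y : ℝ, L₁ ≤ y → 0 < F y)
    (hint : IntegrableOn (fun y => (F y)⁻¹) (Set.Ici L₁))
    (hblow : T - ∫ y in Set.Ici L₁, (F y)⁻¹ < 0) :
    ∃ s : ℝ → ℝ, ContinuousOn s (Set.Icc 0 T) ∧ s T = L₁ ∧
      (∀ t ∈ Set.Icc 0 T, L₁ ≤ s t) ∧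
      (∀ t ∈ Set.Icc 0 T, s t = L₁ + ∫ r in Set.Ioc t T, F (s r)) := by
  set f : ℝ → ℝ := fun y => (F y)⁻¹ with hf
  set g : ℝ → ℝ := fun y => ∫ u in L₁..y, f u with hg
  -- interval integrability of f above L₁
  have hii : ∀ a b : ℝ, L₁ ≤ a → L₁ ≤ b → IntervalIntegrable f volume a b := by
    intro a b ha hb
    rw [intervalIntegrable_iff]
    refine hint.mono_set ?_
    refine subset_trans Set.Ioc_subset_Icc_self ?_
    intro x hx
    exact le_trans (le_min ha hb) hx.1
  -- strict monotonicity of g on Ici L₁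
  have hgm : StrictMonoOn g (Set.Ici L₁) := by
    intro a ha b hb hab
    have hadd := integral_add_adjacent_intervals (hii L₁ a le_rfl ha) (hii a b ha hb)
    have hposint : 0 < ∫ x in a..b, f x := by
      refine intervalIntegral_pos_of_pos_on (hii a b ha hb) ?_ hab
      intro x hx
      exact inv_pos.2 (hpos x (le_trans ha hx.1.le))
    simp only [hg]
    rw [← hadd]
    linarith
  have hgL : g L₁ = 0 := integral_same
  -- continuity of g on Icc L₁ M for any M
  have hgc : ∀ M : ℝ, ContinuousOn g (Set.Icc L₁ M) := by
    intro M
    have h1 : ContinuousOn (fun x => ∫ t in Set.Ioc L₁ x, f t) (Set.Icc L₁ M) :=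
      continuousOn_primitive (hint.mono_set Set.Icc_subset_Ici_self)
    refine h1.congr ?_
    intro x hx
    exact (integral_of_le hx.1)
  -- tendsto at top
  have hIoi : IntegrableOn f (Set.Ioi L₁) := hint.mono_set Set.Ioi_subset_Ici_self
  have htend : Filter.Tendsto g Filter.atTop (nhds (∫ y in Set.Ioi L₁, f y)) :=
    intervalIntegral_tendsto_integral_Ioi L₁ hIoi Filter.tendsto_id
  have hTlt : T < ∫ y in Set.Ioi L₁, f y := by
    rw [← integral_Ici_eq_integral_Ioi]
    linarith
  obtain ⟨M₀, hM₀L, hM₀⟩ : ∃ M₀, L₁ ≤ M₀ ∧ T < g M₀ := by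
    have h2 := htend.eventually (eventually_gt_nhds hTlt)
    obtain ⟨M₀, hM₀⟩ := (h2.and (Filter.eventually_ge_atTop L₁)).exists
    exact ⟨M₀, hM₀.2, hM₀.1⟩
  -- find M with g M = T
  obtain ⟨M, hMmem, hgM⟩ : ∃ M ∈ Set.Icc L₁ M₀, g M = T := by
    have := intermediate_value_Icc hM₀L (hgc M₀)
    have hTin : T ∈ Set.Icc (g L₁) (g M₀) := ⟨by rw [hgL]; exact hT.le, hM₀.le⟩
    obtain ⟨M, hM1, hM2⟩ := this hTin
    exact ⟨M, hM1, hM2⟩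
  have hML : L₁ ≤ M := hMmem.1
  have hgmono : MonotoneOn g (Set.Ici L₁) := hgm.monotoneOn
  -- range of g on Icc L₁ M is within Icc 0 T
  have hrange : ∀ y ∈ Set.Icc L₁ M, g y ∈ Set.Icc 0 T := by
    intro y hy
    constructor
    · rw [← hgL]; exact hgmono self_mem_Ici hy.1 hy.1
    · rw [← hgM]; exact hgmono hy.1 hML hy.2
  -- the map e
  let e : ↥(Set.Icc L₁ M) → ↥(Set.Icc 0 T) := fun y =>
    ⟨T - g y.1, by
      have := hrange y.1 y.2
      exact ⟨by linarith [this.2], by linarith [this.1]⟩⟩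
  have hebij : Function.Bijective e := by
    constructor
    · intro y₁ y₂ h
      have : T - g y₁.1 = T - g y₂.1 := congrArg Subtype.val h
      have hgy : g y₁.1 = g y₂.1 := by linarith
      exact Subtype.ext (hgm.injOn (Set.mem_Ici.2 y₁.2.1) (Set.mem_Ici.2 y₂.2.1) hgy)
    · intro c
      have hTc : T - c.1 ∈ Set.Icc (g L₁) (g M) := by
        rw [hgL, hgM]
        exact ⟨by linarith [c.2.2], by linarith [c.2.1]⟩
      obtain ⟨y, hy1, hy2⟩ := intermediate_value_Icc hML ((hgc M₀).mono
        (Set.Icc_subset_Icc le_rfl hMmem.2)) hTc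
      refine ⟨⟨y, hy1⟩, ?_⟩
      apply Subtype.ext
      show T - g y = c.1
      rw [hy2]; ring
  let eq : ↥(Set.Icc L₁ M) ≃ ↥(Set.Icc 0 T) := Equiv.ofBijective e hebij
  have hecont : Continuous (eq : ↥(Set.Icc L₁ M) → ↥(Set.Icc 0 T)) := by
    refine Continuous.subtype_mk ?_ _
    exact continuous_const.sub ((hgc M).restrict)
  let homeo := Continuous.homeoOfEquivCompactToT2 (f := eq) hecont
  -- define s
  set s : ℝ → ℝ := fun t =>
    if h : t ∈ Set.Icc 0 T then ((homeo.symm ⟨t, h⟩ : (Set.Icc L₁ M : Set ℝ)) : ℝ) else L₁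
    with hs_def
  have key1 : ∀ t (h : t ∈ Set.Icc 0 T), s t ∈ Set.Icc L₁ M := by
    intro t h
    simp only [hs_def, dif_pos h]
    exact (homeo.symm ⟨t, h⟩).2
  have key2 : ∀ t (h : t ∈ Set.Icc 0 T), g (s t) = T - t := by
    intro t h
    have := homeo.apply_symm_apply ⟨t, h⟩
    have h2 : T - g ((homeo.symm ⟨t, h⟩ : (Set.Icc L₁ M : Set ℝ)) : ℝ) = t :=
      congrArg Subtype.val this
    simp only [hs_def, dif_pos h]
    linarith
  have hTmem : T ∈ Set.Icc 0 T := ⟨hT.le, le_rfl⟩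
  have hsT : s T = L₁ := by
    have h1 : g (s T) = 0 := by rw [key2 T hTmem]; ring
    have h2 : g (s T) = g L₁ := by rw [h1, hgL]
    exact hgm.injOn (Set.mem_Ici.2 (key1 T hTmem).1) self_mem_Ici h2
  -- continuity of s on Icc 0 T
  have hscont : ContinuousOn s (Set.Icc 0 T) := by
    rw [continuousOn_iff_continuous_restrict]
    have : (Set.Icc 0 T).restrict s = fun p => ((homeo.symm p : (Set.Icc L₁ M : Set ℝ)) : ℝ) := by
      funext p
      exact dif_pos p.2
    change Continuous ((Set.Icc 0 T).restrict s)
    rw [this]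
    exact continuous_subtype_val.comp homeo.symm.continuous
  -- derivative of s at interior points
  have hsderiv : ∀ r₀ ∈ Set.Ioo (0:ℝ) T, HasDerivAt s (-F (s r₀)) r₀ := by
    intro r₀ hr₀
    have hr : r₀ ∈ Set.Icc 0 T := ⟨hr₀.1.le, hr₀.2.le⟩
    have hyM := key1 r₀ hr
    have hylt : L₁ < s r₀ := by
      rcases lt_or_eq_of_le hyM.1 with h | h
      · exact h
      · exfalso
        have h1 : g (s r₀) = T - r₀ := key2 r₀ hr
        rw [← h, hgL] at h1
        linarith [hr₀.2]
    have hFy : 0 < F (s r₀) := hpos (s r₀) hyM.1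
    have gderiv : HasDerivAt g (f (s r₀)) (s r₀) := by
      refine integral_hasDerivAt_right (hii L₁ (s r₀) le_rfl hyM.1) ?_ ?_
      · exact (hF.measurable.inv.stronglyMeasurable).stronglyMeasurableAtFilter
      · exact hF.continuousAt.inv₀ hFy.ne'
    have fderiv : HasDerivAt (fun y => T - g y) (-(f (s r₀))) (s r₀) := by
      exact ((hasDerivAt_const (s r₀) T).sub gderiv).congr_deriv (zero_sub _)
    have cont_s : ContinuousAt s r₀ :=
      hscont.continuousAt (Icc_mem_nhds hr₀.1 hr₀.2)
    have hev : ∀ᶠ t in nhds r₀, (fun y => T - g y) (s t) = t := by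
      filter_upwards [Icc_mem_nhds hr₀.1 hr₀.2] with t ht
      have := key2 t ht
      show T - g (s t) = t
      linarith
    have hne : -(f (s r₀)) ≠ 0 := by
      simp only [hf, neg_ne_zero, ne_eq, inv_eq_zero]
      exact hFy.ne'
    have := HasDerivAt.of_local_left_inverse cont_s fderiv hne hev
    have heq : (-(f (s r₀)))⁻¹ = -F (s r₀) := by
      simp only [hf]
      rw [inv_neg, inv_inv]
    rwa [heq] at this
  -- the integral equation
  refine ⟨s, hscont, hsT, fun t ht => (key1 t ht).1, ?_⟩
  intro t ht
  rcases eq_or_lt_of_le ht.2 with rfl | htT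
  · simp [hsT]
  · have hcont' : ContinuousOn s (Set.Icc t T) :=
      hscont.mono (Set.Icc_subset_Icc ht.1 le_rfl)
    have hderiv : ∀ x ∈ Set.Ioo t T, HasDerivWithinAt s (-F (s x)) (Set.Ioi x) x := by
      intro x hx
      exact (hsderiv x ⟨lt_of_le_of_lt ht.1 hx.1, hx.2⟩).hasDerivWithinAt
    have hf'int : IntervalIntegrable (fun r => -F (s r)) volume t T := by
      apply ContinuousOn.intervalIntegrable
      rw [Set.uIcc_of_le ht.2]
      exact (hF.comp_continuousOn hcont').neg
    have hftc := integral_eq_sub_of_hasDeriv_right_of_le ht.2 hcont' hderiv hf'int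
    rw [hsT] at hftc
    have h1 : ∫ y in t..T, -F (s y) = -∫ y in t..T, F (s y) := integral_neg
    have h2 : ∫ y in t..T, F (s y) = ∫ r in Set.Ioc t T, F (s r) := integral_of_le ht.2
    rw [h1, h2] at hftc
    linarith
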